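/- arXiv:2501.13596 — 9 statements merged into one kernel-verified Lean document; each statement's English description precedes it below -/
import Mathlib

section
/- Let G = (V,E) be an undirected graph on n vertices, let K ⊆ F ⊆ V with |F| ≤ f < n/2. Let A_K be the vertex set of a largest connected component of G - K, and let B_K = V \ (K ∪ A_K). If either (i) |A_K| < n - |F|, or (ii) |A_K| ≥ n - |F| and B_K is not contained in F, then F is a vertex cut in G (i.e., G - F is disconnected). -/
open SimpleGraph

/-- `F` is a vertex cut in `G`: two vertices outside `F` are disconnected in `G - F`. -/
def SimpleGraph.IsVertexCut {α : Type*} (G : SimpleGraph α) (F : Set α) : Prop :=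
  ∃ s t : ↥Fᶜ, ¬ (G.induce Fᶜ).Reachable s t

/-- If `A` is (the vertex set of) a largest connected component of `G - K`, `B` is the union
of all other components, `K ⊆ F`, `|F| ≤ f < n/2`, and either (i) `|A| < n - |F|`, or
(ii) `|A| ≥ n - |F|` and `B ⊄ F`, then `F` is a vertex cut in `G`. -/
theorem stmt1 {V : Type*} [Fintype V] (G : SimpleGraph V) (f : ℕ)
    (K F : Set V) (hKF : K ⊆ F) (hFf : F.ncard ≤ f) (hfn : 2 * f < Fintype.card V)
    (c : (G.induce Kᶜ).ConnectedComponent)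
    (A : Set V) (hA : A = Subtype.val '' c.supp)
    (hmax : ∀ c' : (G.induce Kᶜ).ConnectedComponent, c'.supp.ncard ≤ c.supp.ncard)
    (B : Set V) (hB : B = Kᶜ \ A)
    (h : A.ncard < Fintype.card V - F.ncard ∨
        (Fintype.card V - F.ncard ≤ A.ncard ∧ ¬ B ⊆ F)) :
    G.IsVertexCut F := by
  classical
  have hFK : (Fᶜ : Set V) ⊆ Kᶜ := Set.compl_subset_compl.mpr hKF
  -- hom from induce Fᶜ to induce Kᶜ
  let φ : G.induce Fᶜ →g G.induce Kᶜ :=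
    ⟨Set.inclusion hFK, fun h => h⟩
  have hlift : ∀ (s t : ↥Fᶜ), (G.induce Fᶜ).Reachable s t →
      (G.induce Kᶜ).Reachable ⟨s.1, hFK s.2⟩ ⟨t.1, hFK t.2⟩ := by
    intro s t hr
    exact hr.map φ
  have hAcard : A.ncard = c.supp.ncard := by
    rw [hA]; exact Set.ncard_image_of_injective _ Subtype.val_injective
  have hFcompl : F.ncard + (Fᶜ : Set V).ncard = Fintype.card V := by
    rw [← Nat.card_eq_fintype_card]
    exact Set.ncard_add_ncard_compl F
  rcases h with h1 | ⟨h2, h3⟩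
  · -- case (i): not all of Fᶜ fits in one component
    have hne : (Fᶜ : Set V).Nonempty := by
      rw [Set.nonempty_iff_ne_empty]
      intro he
      rw [he, Set.ncard_empty] at hFcompl
      omega
    obtain ⟨x₀, hx₀⟩ := hne
    by_contra hcut
    rw [SimpleGraph.IsVertexCut] at hcut
    push_neg at hcut
    set c' := (G.induce Kᶜ).connectedComponentMk ⟨x₀, hFK hx₀⟩ with hc'
    have hsub : (Fᶜ : Set V) ⊆ Subtype.val '' c'.supp := by
      intro y hy
      refine ⟨⟨y, hFK hy⟩, ?_, rfl⟩
      rw [SimpleGraph.ConnectedComponent.mem_supp_iff, hc']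
      exact SimpleGraph.ConnectedComponent.sound
        ((hlift ⟨y, hy⟩ ⟨x₀, hx₀⟩ (hcut ⟨y, hy⟩ ⟨x₀, hx₀⟩)))
    have h4 : (Fᶜ : Set V).ncard ≤ c'.supp.ncard := by
      calc (Fᶜ : Set V).ncard ≤ (Subtype.val '' c'.supp).ncard :=
            Set.ncard_le_ncard hsub (Set.toFinite _)
        _ = c'.supp.ncard := Set.ncard_image_of_injective _ Subtype.val_injective
    have h5 := hmax c'
    omega
  · -- case (ii)
    have hAF : ¬ A ⊆ F := by
      intro hsub
      have := Set.ncard_le_ncard hsub (Set.toFinite _)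
      omega
    obtain ⟨a, haA, haF⟩ := Set.not_subset.mp hAF
    obtain ⟨b, hbB, hbF⟩ := Set.not_subset.mp h3
    refine ⟨⟨a, haF⟩, ⟨b, hbF⟩, fun hr => ?_⟩
    have hr' := hlift _ _ hr
    have hb' : b ∈ Kᶜ \ A := hB ▸ hbB
    have ha' : (⟨a, hFK haF⟩ : ↥Kᶜ) ∈ c.supp := by
      rw [hA] at haA
      obtain ⟨a', ha'c, rfl⟩ := haA
      simpa using ha'c
    have hb'' : (⟨b, hFK hbF⟩ : ↥Kᶜ) ∉ c.supp := by
      intro hmem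
      exact hb'.2 (hA ▸ ⟨⟨b, hFK hbF⟩, hmem, rfl⟩)
    rw [SimpleGraph.ConnectedComponent.mem_supp_iff] at ha' hb''
    exact hb'' (by rw [← ha']; exact SimpleGraph.ConnectedComponent.sound hr'.symm)
end

section
/- Let G = (V,E) be a connected undirected graph and S ⊆ V. Then for every F ⊆ V, F is a vertex cut in G if and only if at least one of the following holds: (1) F separates S in G (i.e., two vertices of S \ F lie in different components of G - F); (2) S ⊆ F and G - (S ∪ F) is disconnected; (3) S is not contained in F and G - (S ∪ F) has a connected component C whose neighborhood N(C) in G satisfies N(C) ⊆ F. -/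
open SimpleGraph

private lemma reach_mono {V : Type*} (G : SimpleGraph V) {A B : Set V} (h : A ⊆ B)
    {x y : ↥A} (r : (G.induce A).Reachable x y) :
    (G.induce B).Reachable ⟨↑x, h x.2⟩ ⟨↑y, h y.2⟩ :=
  Reachable.map ⟨Set.inclusion h, fun hadj => hadj⟩ r

private lemma crossing {V : Type*} (G : SimpleGraph V) {A B : Set V} {x y : ↥B}
    (w : (G.induce B).Walk x y) (hx : ↑x ∈ A) (hy : (↑y : V) ∉ A) :
    ∃ (u v : V) (hu : u ∈ A), (G.induce A).Reachable ⟨↑x, hx⟩ ⟨u, hu⟩ ∧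
      G.Adj u v ∧ v ∉ A ∧ v ∈ B := by
  induction w with
  | nil => exact absurd hx hy
  | @cons a b c h p ih =>
    by_cases hb : (↑b : V) ∈ A
    · obtain ⟨u, v, hu, hr, hadj, hvA, hvB⟩ := ih hb hy
      exact ⟨u, v, hu, (Adj.reachable (show (G.induce A).Adj ⟨↑a, hx⟩ ⟨↑b, hb⟩ from h)).trans hr,
        hadj, hvA, hvB⟩
    · exact ⟨↑a, ↑b, hx, Reachable.refl _, h, hb, b.2⟩


/-- `F` separates `X` in `G`: two vertices of `X \ F` are disconnected in `G - F`. -/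
def SimpleGraph.SepSet {α : Type*} (G : SimpleGraph α) (F X : Set α) : Prop :=
  ∃ s t : ↥Fᶜ, (s : α) ∈ X ∧ (t : α) ∈ X ∧ ¬ (G.induce Fᶜ).Reachable s t

/-- The neighborhood of a set `X`: vertices outside `X` with a neighbor in `X`. -/
def SimpleGraph.nbhd {α : Type*} (G : SimpleGraph α) (X : Set α) : Set α :=
  {v | v ∉ X ∧ ∃ u ∈ X, G.Adj v u}

/-- For a connected graph `G` and `S ⊆ V`: `F` is a vertex cut iff (1) `F` separates `S`,
or (2) `S ⊆ F` and `G - (S ∪ F)` is disconnected, or (3) `S ⊄ F` and `G - (S ∪ F)` has a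
connected component `C` with `N(C) ⊆ F`. -/
theorem stmt2 {V : Type*} [Fintype V] (G : SimpleGraph V) (hG : G.Connected)
    (S F : Set V) :
    G.IsVertexCut F ↔
      (G.SepSet F S ∨
        (S ⊆ F ∧ G.IsVertexCut (S ∪ F)) ∨
        (¬ S ⊆ F ∧ ∃ c : (G.induce (S ∪ F)ᶜ).ConnectedComponent,
            G.nbhd (Subtype.val '' c.supp) ⊆ F)) := by
  have hAB : (S ∪ F)ᶜ ⊆ Fᶜ := Set.compl_subset_compl.mpr Set.subset_union_right
  constructor
  · rintro ⟨s, t, hst⟩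
    by_cases hsep : G.SepSet F S
    · exact Or.inl hsep
    rw [SimpleGraph.SepSet] at hsep
    push_neg at hsep
    by_cases hSF : S ⊆ F
    · exact Or.inr (Or.inl ⟨hSF, by rw [Set.union_eq_self_of_subset_left hSF]; exact ⟨s, t, hst⟩⟩)
    right; right
    refine ⟨hSF, ?_⟩
    obtain ⟨s0, hs0S, hs0F⟩ := Set.not_subset.mp hSF
    have key : ∃ t1 : ↥Fᶜ, ¬ (G.induce Fᶜ).Reachable ⟨s0, hs0F⟩ t1 := by
      by_contra hcon
      push_neg at hcon
      exact hst ((hcon s).symm.trans (hcon t))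
    obtain ⟨t1, ht1⟩ := key
    have ht1S : (↑t1 : V) ∉ S := fun h => ht1 (hsep ⟨s0, hs0F⟩ t1 hs0S h)
    have ht1A : (↑t1 : V) ∈ (S ∪ F)ᶜ := by
      simp only [Set.mem_compl_iff, Set.mem_union]
      exact fun h => h.elim ht1S t1.2
    refine ⟨(G.induce (S ∪ F)ᶜ).connectedComponentMk ⟨↑t1, ht1A⟩, ?_⟩
    rintro v ⟨hvnot, u, huimg, hadjvu⟩
    by_contra hvF
    obtain ⟨u', hu'supp, rfl⟩ := huimg
    have hreach_tu : (G.induce (S ∪ F)ᶜ).Reachable ⟨↑t1, ht1A⟩ u' := by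
      rw [ConnectedComponent.mem_supp_iff] at hu'supp
      exact ConnectedComponent.exact hu'supp.symm
    by_cases hvA : v ∈ (S ∪ F)ᶜ
    · apply hvnot
      refine ⟨⟨v, hvA⟩, ?_, rfl⟩
      rw [ConnectedComponent.mem_supp_iff]
      exact ConnectedComponent.sound
        ((Adj.reachable (show (G.induce (S ∪ F)ᶜ).Adj ⟨v, hvA⟩ u' from hadjvu)).trans
          hreach_tu.symm)
    · have hvS : v ∈ S := by
        simp only [Set.mem_compl_iff, Set.mem_union, not_not] at hvA
        exact hvA.resolve_right hvF
      have hreach_s0v : (G.induce Fᶜ).Reachable ⟨s0, hs0F⟩ ⟨v, hvF⟩ :=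
        hsep ⟨s0, hs0F⟩ ⟨v, hvF⟩ hs0S hvS
      have hreach_vu : (G.induce Fᶜ).Adj ⟨v, hvF⟩ ⟨↑u', hAB u'.2⟩ := hadjvu
      have hreach_ut : (G.induce Fᶜ).Reachable ⟨↑u', hAB u'.2⟩ t1 :=
        (reach_mono G hAB hreach_tu).symm
      exact ht1 ((hreach_s0v.trans hreach_vu.reachable).trans hreach_ut)
  · rintro (⟨s, t, _, _, hst⟩ | ⟨hSF, hcut⟩ | ⟨hSF, c, hc⟩)
    · exact ⟨s, t, hst⟩
    · rwa [Set.union_eq_self_of_subset_left hSF] at hcut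
    · obtain ⟨s0, hs0S, hs0F⟩ := Set.not_subset.mp hSF
      obtain ⟨t', ht'⟩ := c.exists_rep
      refine ⟨⟨s0, hs0F⟩, ⟨↑t', hAB t'.2⟩, fun hr => ?_⟩
      obtain ⟨w⟩ := hr.symm
      have hs0A : s0 ∉ (S ∪ F)ᶜ := fun h => h (Or.inl hs0S)
      obtain ⟨u, v, hu, hreach, hadj, hvA, hvB⟩ := crossing G w t'.2 hs0A
      have huc : (⟨u, hu⟩ : ↥(S ∪ F)ᶜ) ∈ c.supp := by
        rw [ConnectedComponent.mem_supp_iff, ← ht']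
        exact ConnectedComponent.sound
          (show (G.induce (S ∪ F)ᶜ).Reachable ⟨u, hu⟩ ⟨↑t', t'.2⟩ from hreach.symm)
      have : v ∈ G.nbhd (Subtype.val '' c.supp) := by
        refine ⟨?_, u, ⟨⟨u, hu⟩, huc, rfl⟩, hadj.symm⟩
        rintro ⟨w', _, rfl⟩
        exact hvA w'.2
      exact hvB (hc this)
end

section
/- Let G be an undirected graph with a vertex cut (L,S,R) (partition of V with L,R nonempty and no edges between L and R). Let G_L be the f-left graph: delete R \ U_R where U_R ⊆ R with |U_R| = min(f+1, |R|), add all edges within U_R and all edges between U_R and S. If F ⊆ V(G_L) with |F| ≤ f separates two vertices x,y in G_L, then F separates x and y in G. -/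
open SimpleGraph

/-- `F` separates the vertices `x` and `y` in `G`: `x, y ∉ F` and `x, y` are
disconnected in `G - F`. -/
def SimpleGraph.SepPair {α : Type*} (G : SimpleGraph α) (F : Set α) (x y : α) : Prop :=
  ∃ (hx : x ∈ Fᶜ) (hy : y ∈ Fᶜ), ¬ (G.induce Fᶜ).Reachable ⟨x, hx⟩ ⟨y, hy⟩

/-- The "`f`-left graph" on the vertex set `W` (intended: `W = L ∪ S ∪ U_R`):
all edges of `G` inside `W`, plus a clique on `U_R` and a biclique between `U_R` and `S`. -/
def leftGraph {α : Type*} (G : SimpleGraph α) (S UR W : Set α) : SimpleGraph ↥W where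
  Adj a b := a ≠ b ∧ (G.Adj (a : α) (b : α) ∨ ((a : α) ∈ UR ∧ (b : α) ∈ UR) ∨
      ((a : α) ∈ UR ∧ (b : α) ∈ S) ∨ ((a : α) ∈ S ∧ (b : α) ∈ UR))
  symm := by
    constructor
    rintro a b ⟨hne, h⟩
    refine ⟨hne.symm, ?_⟩
    rcases h with h | ⟨h1, h2⟩ | ⟨h1, h2⟩ | ⟨h1, h2⟩
    · exact Or.inl h.symm
    · exact Or.inr (Or.inl ⟨h2, h1⟩)
    · exact Or.inr (Or.inr (Or.inr ⟨h2, h1⟩))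
    · exact Or.inr (Or.inr (Or.inl ⟨h2, h1⟩))
  loopless := by constructor; rintro a ⟨hne, -⟩; exact hne rfl

/-- Soundness of the left graph: if `F ⊆ V(G_L)`, `|F| ≤ f`, and `F` separates two
vertices `x, y` in `G_L`, then `F` separates `x` and `y` in `G`. -/
theorem stmt3 {V : Type*} [Fintype V] (G : SimpleGraph V) (f : ℕ) (hf : 1 ≤ f)
    (L S R : Set V) (hLne : L.Nonempty) (hRne : R.Nonempty)
    (hUnion : L ∪ S ∪ R = Set.univ) (hLS : Disjoint L S) (hLR : Disjoint L R)
    (hSR : Disjoint S R)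
    (hnoedge : ∀ a ∈ L, ∀ b ∈ R, ¬ G.Adj a b)
    (UR : Set V) (hURsub : UR ⊆ R) (hURcard : UR.ncard = min (f + 1) R.ncard)
    (F : Set V) (hFsub : F ⊆ L ∪ S ∪ UR) (hFcard : F.ncard ≤ f)
    (x y : ↥(L ∪ S ∪ UR))
    (hsep : (leftGraph G S UR (L ∪ S ∪ UR)).SepPair
      {a : ↥(L ∪ S ∪ UR) | (a : V) ∈ F} x y) :
    G.SepPair F (x : V) (y : V) := by
  classical
  obtain ⟨hx, hy, hreach⟩ := hsep
  refine ⟨hx, hy, fun h => hreach ?_⟩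
  -- helpers
  have hWR : ∀ a : V, a ∈ L ∪ S ∪ UR → a ∈ R → a ∈ UR := by
    intro a haW haR
    rcases haW with (haL | haS) | haUR
    · exact absurd haR (Set.disjoint_left.mp hLR haL)
    · exact absurd haR (Set.disjoint_left.mp hSR haS)
    · exact haUR
  have hmemW : ∀ v : V, v ∉ R \ UR → v ∈ L ∪ S ∪ UR := by
    intro v hv
    have hvu : v ∈ L ∪ S ∪ R := hUnion ▸ Set.mem_univ v
    rcases hvu with h' | hR
    · exact Or.inl h'
    · by_cases hvU : v ∈ UR
      · exact Or.inr hvU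
      · exact absurd ⟨hR, hvU⟩ hv
  -- the replacement vertex
  obtain ⟨u, hu⟩ : ∃ u : V, ∀ v ∈ R \ UR, u ∈ UR ∧ u ∉ F := by
    by_cases hne : (UR \ F).Nonempty
    · exact ⟨hne.choose, fun _ _ => ⟨hne.choose_spec.1, hne.choose_spec.2⟩⟩
    · refine ⟨hLne.choose, fun v hv => ?_⟩
      exfalso
      have hUF : UR ⊆ F := by
        intro w hw
        by_contra hwF
        exact hne ⟨w, hw, hwF⟩
      have h1 : UR.ncard ≤ F.ncard := Set.ncard_le_ncard hUF (Set.toFinite F)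
      have h2 : UR.ncard < R.ncard :=
        Set.ncard_lt_ncard
          ((Set.ssubset_iff_of_subset hURsub).mpr ⟨v, hv.1, hv.2⟩) (Set.toFinite R)
      omega
  set T := ↥({a : ↥(L ∪ S ∪ UR) | (a : V) ∈ F}ᶜ) with hT
  set Gl := (leftGraph G S UR (L ∪ S ∪ UR)).induce
      {a : ↥(L ∪ S ∪ UR) | (a : V) ∈ F}ᶜ with hGL
  -- reach between UR and (S ∪ UR) vertices in Gl
  have hreachUR : ∀ p q : T, ((p : ↥(L ∪ S ∪ UR)) : V) ∈ UR →
      (((q : ↥(L ∪ S ∪ UR)) : V) ∈ S ∨ ((q : ↥(L ∪ S ∪ UR)) : V) ∈ UR) →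
      Gl.Reachable p q := by
    intro p q hp hq
    by_cases hpq : ((p : ↥(L ∪ S ∪ UR)) : V) = ((q : ↥(L ∪ S ∪ UR)) : V)
    · have : p = q := Subtype.ext (Subtype.ext hpq)
      rw [this]
    · refine Adj.reachable ?_
      show (leftGraph G S UR (L ∪ S ∪ UR)).Adj ↑p ↑q
      refine ⟨fun hh => hpq (congrArg _ hh), ?_⟩
      rcases hq with hS | hU
      · exact Or.inr (Or.inr (Or.inl ⟨hp, hS⟩))
      · exact Or.inr (Or.inl ⟨hp, hU⟩)
  -- the simulation relation
  set Rel : V → T → Prop := fun v w =>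
    (v ∉ R \ UR ∧ ((w : ↥(L ∪ S ∪ UR)) : V) = v) ∨
      (v ∈ R \ UR ∧ ((w : ↥(L ∪ S ∪ UR)) : V) = u) with hRel
  have main : ∀ (a b : ↥Fᶜ) (p : (G.induce Fᶜ).Walk a b) (a' b' : T),
      Rel ↑a a' → Rel ↑b b' → Gl.Reachable a' b' := by
    intro a b p
    induction p with
    | nil =>
      intro a' b' ha hb
      rcases ha with ⟨hn, he⟩ | ⟨hn, he⟩ <;> rcases hb with ⟨hn2, he2⟩ | ⟨hn2, he2⟩
      · rw [show a' = b' from Subtype.ext (Subtype.ext (he.trans he2.symm))]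
      · exact absurd hn2 hn
      · exact absurd hn hn2
      · rw [show a' = b' from Subtype.ext (Subtype.ext (he.trans he2.symm))]
    | @cons va vc vb hedge p ih =>
      intro a' b' ha hb
      have hadj : G.Adj (va : V) (vc : V) := hedge
      by_cases hc : (vc : V) ∈ R \ UR
      · obtain ⟨huU, huF⟩ := hu _ hc
        let c' : T := ⟨⟨u, Or.inr huU⟩, huF⟩
        refine Reachable.trans ?_ (ih c' b' (Or.inr ⟨hc, rfl⟩) hb)
        rcases ha with ⟨hn, he⟩ | ⟨hn, he⟩
        · have hvaW : (va : V) ∈ L ∪ S ∪ UR := he ▸ (a' : ↥(L ∪ S ∪ UR)).2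
          have hvaL : (va : V) ∉ L := fun hL => hnoedge _ hL _ hc.1 hadj
          have hvaSU : (va : V) ∈ S ∨ (va : V) ∈ UR := by
            rcases hvaW with (h' | h') | h'
            · exact absurd h' hvaL
            · exact Or.inl h'
            · exact Or.inr h'
          rcases hvaSU with hS | hU
          · exact (hreachUR c' a' huU (Or.inl (he ▸ hS))).symm
          · exact hreachUR a' c' (he ▸ hU) (Or.inr huU)
        · rw [show a' = c' from Subtype.ext (Subtype.ext he)]
      · have hvcF : (vc : V) ∉ F := vc.2
        let c' : T := ⟨⟨(vc : V), hmemW _ hc⟩, hvcF⟩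
        refine Reachable.trans ?_ (ih c' b' (Or.inl ⟨hc, rfl⟩) hb)
        rcases ha with ⟨hn, he⟩ | ⟨hn, he⟩
        · refine Adj.reachable ?_
          show (leftGraph G S UR (L ∪ S ∪ UR)).Adj ↑a' ↑c'
          refine ⟨?_, Or.inl ?_⟩
          · intro hh
            apply hadj.ne
            have h3 : ((a' : ↥(L ∪ S ∪ UR)) : V) = ((c' : ↥(L ∪ S ∪ UR)) : V) :=
              congrArg Subtype.val hh
            rw [he] at h3
            exact h3
          · show G.Adj ((a' : ↥(L ∪ S ∪ UR)) : V) (vc : V)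
            rw [he]; exact hadj
        · obtain ⟨huU, huF⟩ := hu _ hn
          have hvcL : (vc : V) ∉ L := fun hL => hnoedge _ hL _ hn.1 hadj.symm
          have hvcSU : (vc : V) ∈ S ∨ (vc : V) ∈ UR := by
            rcases hmemW _ hc with (h' | h') | h'
            · exact absurd h' hvcL
            · exact Or.inl h'
            · exact Or.inr h'
          exact hreachUR a' c' (he ▸ huU) hvcSU
  obtain ⟨p⟩ := h
  have hxnot : (x : V) ∉ R \ UR := fun hr => hr.2 (hWR _ x.2 hr.1)
  have hynot : (y : V) ∉ R \ UR := fun hr => hr.2 (hWR _ y.2 hr.1)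
  exact main ⟨(x : V), hx⟩ ⟨(y : V), hy⟩ p ⟨x, hx⟩ ⟨y, hy⟩
    (Or.inl ⟨hxnot, rfl⟩) (Or.inl ⟨hynot, rfl⟩)
end

section
/- Let G be an undirected graph with terminal set T ⊆ V and a vertex T-cut (L,S,R), where U_R consists of min(f+1,|R|) vertices of R chosen so that terminals of T ∩ R come first, and symmetrically U_L for L. Let G_L, G_R be the f-left and f-right graphs. If F ⊆ V with |F| ≤ f separates T in G but does not separate S in G, then either F ∩ V(G_L) separates T ∩ V(G_L) in G_L, or F ∩ V(G_R) separates T ∩ V(G_R) in G_R. -/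
open SimpleGraph

/-- If `UR \ F` were empty, then `UR = R` and `R ⊆ F`, contradicting `(R \ F).Nonempty`. -/
lemma UFne {V : Type*} [Fintype V] (R UR F : Set V) (f : ℕ)
    (hURsub : UR ⊆ R) (hURcard : UR.ncard = min (f + 1) R.ncard)
    (hFcard : F.ncard ≤ f) (hRF : (R \ F).Nonempty) : (UR \ F).Nonempty := by
  rw [Set.nonempty_iff_ne_empty]
  intro h
  rw [Set.diff_eq_empty] at h
  have h1 : UR.ncard ≤ f := le_trans (Set.ncard_le_ncard h F.toFinite) hFcard
  have h3 : UR.ncard = R.ncard := by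
    rw [hURcard]
    rw [hURcard] at h1
    exact min_eq_right (by omega)
  have h4 : UR = R := Set.eq_of_subset_of_ncard_le hURsub h3.ge R.toFinite
  obtain ⟨x, hxR, hxF⟩ := hRF
  exact hxF (h (h4 ▸ hxR))

/-- Everything reachable in `G - F` from a vertex of `L` not touching `S` stays in `L`. -/
lemma reachL {V : Type*} (G : SimpleGraph V) (L S R F : Set V)
    (hUnion : L ∪ S ∪ R = Set.univ)
    (hnoedge : ∀ a ∈ L, ∀ b ∈ R, ¬ G.Adj a b) :
    ∀ (u v : ↥Fᶜ) (_ : (G.induce Fᶜ).Walk u v), (u : V) ∈ L →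
      (∀ s : ↥Fᶜ, (s : V) ∈ S → ¬ (G.induce Fᶜ).Reachable u s) → (v : V) ∈ L := by
  intro u v p
  induction p with
  | nil => exact fun h _ => h
  | @cons u x v h q ih =>
    intro hu hS
    have hadj : G.Adj (u : V) (x : V) := h
    have hxmem : (x : V) ∈ L ∪ S ∪ R := by rw [hUnion]; trivial
    have hx : (x : V) ∈ L := by
      rcases hxmem with (hx | hx) | hx
      · exact hx
      · exact absurd (Adj.reachable h) (hS x hx)
      · exact absurd hadj (hnoedge _ hu _ hx)
    exact ih hx (fun s hs hr => hS s hs ((Adj.reachable h).trans hr))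

/-- Key: a walk in `G_L - F` starting at a vertex of `L` whose `G - F` component avoids `S`
projects to reachability in `G - F`. -/
lemma key {V : Type*} (G : SimpleGraph V) (L S R UR F : Set V)
    (hUnion : L ∪ S ∪ R = Set.univ) (hLR : Disjoint L R) (hLS : Disjoint L S)
    (hURsub : UR ⊆ R)
    (hnoedge : ∀ a ∈ L, ∀ b ∈ R, ¬ G.Adj a b)
    (t : ↥Fᶜ) (htL : (t : V) ∈ L)
    (hnotouch : ∀ s : ↥Fᶜ, (s : V) ∈ S → ¬ (G.induce Fᶜ).Reachable t s) :
    ∀ (x y : ↥({a : ↥(L ∪ S ∪ UR) | (a : V) ∈ F}ᶜ))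
      (_ : ((leftGraph G S UR (L ∪ S ∪ UR)).induce {a : ↥(L ∪ S ∪ UR) | (a : V) ∈ F}ᶜ).Walk x y),
      (∃ hx : ((x : ↥(L ∪ S ∪ UR)) : V) ∈ Fᶜ, (G.induce Fᶜ).Reachable t ⟨_, hx⟩) →
      (∃ hy : ((y : ↥(L ∪ S ∪ UR)) : V) ∈ Fᶜ, (G.induce Fᶜ).Reachable t ⟨_, hy⟩) := by
  intro x y p
  induction p with
  | nil => exact fun h => h
  | @cons x z y h q ih =>
    rintro ⟨hx, hr⟩
    have hxL : ((x : ↥(L ∪ S ∪ UR)) : V) ∈ L := by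
      obtain ⟨w⟩ := hr
      exact reachL G L S R F hUnion hnoedge t _ w htL hnotouch
    have hadj : (leftGraph G S UR (L ∪ S ∪ UR)).Adj (x : ↥(L ∪ S ∪ UR)) (z : ↥(L ∪ S ∪ UR)) := h
    obtain ⟨-, hcase⟩ := hadj
    have hxnUR : ((x : ↥(L ∪ S ∪ UR)) : V) ∉ UR := fun hm =>
      hLR.ne_of_mem hxL (hURsub hm) rfl
    have hxnS : ((x : ↥(L ∪ S ∪ UR)) : V) ∉ S := fun hm =>
      hLS.ne_of_mem hxL hm rfl
    have hGadj : G.Adj ((x : ↥(L ∪ S ∪ UR)) : V) ((z : ↥(L ∪ S ∪ UR)) : V) := by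
      rcases hcase with hc | ⟨h1, -⟩ | ⟨h1, -⟩ | ⟨h1, -⟩
      · exact hc
      · exact absurd h1 hxnUR
      · exact absurd h1 hxnUR
      · exact absurd h1 hxnS
    have hz : ((z : ↥(L ∪ S ∪ UR)) : V) ∈ Fᶜ := z.2
    exact ih ⟨hz, hr.trans (Adj.reachable (by exact hGadj :
      (G.induce Fᶜ).Adj ⟨_, hx⟩ ⟨_, hz⟩))⟩

/-- One-sided version: a terminal in `L - F` whose component avoids `S` yields left separation. -/
lemma onesided {V : Type*} [Fintype V] (G : SimpleGraph V) (f : ℕ) (T L S R UR F : Set V)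
    (hUnion : L ∪ S ∪ R = Set.univ) (hLR : Disjoint L R) (hLS : Disjoint L S)
    (hURsub : UR ⊆ R) (hURcard : UR.ncard = min (f + 1) R.ncard)
    (hURfirst : T ∩ R ⊆ UR ∨ UR ⊆ T)
    (hnoedge : ∀ a ∈ L, ∀ b ∈ R, ¬ G.Adj a b)
    (hFcard : F.ncard ≤ f)
    (a b : ↥Fᶜ) (haT : (a : V) ∈ T) (hbT : (b : V) ∈ T)
    (hnr : ¬ (G.induce Fᶜ).Reachable a b)
    (hnotouch : ∀ s : ↥Fᶜ, (s : V) ∈ S → ¬ (G.induce Fᶜ).Reachable a s)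
    (haL : (a : V) ∈ L) :
    (leftGraph G S UR (L ∪ S ∪ UR)).SepSet
      {x : ↥(L ∪ S ∪ UR) | (x : V) ∈ F} {x : ↥(L ∪ S ∪ UR) | (x : V) ∈ T} := by
  obtain ⟨w, hwW, hwT, hwF, hwbad⟩ : ∃ w, w ∈ L ∪ S ∪ UR ∧ w ∈ T ∧ w ∈ Fᶜ ∧
      ∀ hw : w ∈ Fᶜ, ¬ (G.induce Fᶜ).Reachable a ⟨w, hw⟩ := by
    have hbmem : (b : V) ∈ L ∪ S ∪ R := by rw [hUnion]; trivial
    have hbb : ∀ hw : (b : V) ∈ Fᶜ, ¬ (G.induce Fᶜ).Reachable a ⟨↑b, hw⟩ := by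
      intro hw hr
      exact hnr (by rwa [show (⟨↑b, hw⟩ : ↥Fᶜ) = b from Subtype.ext rfl] at hr)
    rcases hbmem with hb | hbR
    · exact ⟨b, Or.inl hb, hbT, b.2, hbb⟩
    · rcases hURfirst with hfi | hfi
      · exact ⟨b, Or.inr (hfi ⟨hbT, hbR⟩), hbT, b.2, hbb⟩
      · obtain ⟨u, huU, huF⟩ := UFne R UR F f hURsub hURcard hFcard ⟨↑b, hbR, b.2⟩
        refine ⟨u, Or.inr huU, hfi huU, huF, ?_⟩
        intro hw hr
        obtain ⟨p⟩ := hr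
        have huL : u ∈ L := reachL G L S R F hUnion hnoedge a ⟨u, hw⟩ p haL hnotouch
        exact hLR.ne_of_mem huL (hURsub huU) rfl
  refine ⟨⟨⟨↑a, Or.inl (Or.inl haL)⟩, a.2⟩, ⟨⟨w, hwW⟩, hwF⟩, haT, hwT, ?_⟩
  intro hr
  obtain ⟨p⟩ := hr
  obtain ⟨hw', hreach⟩ := key G L S R UR F hUnion hLR hLS hURsub hnoedge a haL hnotouch
    _ _ p ⟨a.2, Reachable.refl _⟩
  exact hwbad hw' hreach

/-- Completeness of the left/right graphs: if `F` (of size `≤ f`) separates `T` in `G`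
but does not separate `S`, then `F ∩ V(G_L)` separates `T ∩ V(G_L)` in `G_L`, or
`F ∩ V(G_R)` separates `T ∩ V(G_R)` in `G_R`. -/
theorem stmt4 {V : Type*} [Fintype V] (G : SimpleGraph V) (f : ℕ) (hf : 1 ≤ f)
    (T L S R : Set V) (hLne : L.Nonempty) (hRne : R.Nonempty)
    (hUnion : L ∪ S ∪ R = Set.univ) (hLS : Disjoint L S) (hLR : Disjoint L R)
    (hSR : Disjoint S R)
    (hnoedge : ∀ a ∈ L, ∀ b ∈ R, ¬ G.Adj a b)
    (hTL : (T ∩ L).Nonempty) (hTR : (T ∩ R).Nonempty)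
    (UL : Set V) (hULsub : UL ⊆ L) (hULcard : UL.ncard = min (f + 1) L.ncard)
    (hULfirst : T ∩ L ⊆ UL ∨ UL ⊆ T)
    (UR : Set V) (hURsub : UR ⊆ R) (hURcard : UR.ncard = min (f + 1) R.ncard)
    (hURfirst : T ∩ R ⊆ UR ∨ UR ⊆ T)
    (F : Set V) (hFcard : F.ncard ≤ f)
    (hsepT : G.SepSet F T) (hnsepS : ¬ G.SepSet F S) :
    (leftGraph G S UR (L ∪ S ∪ UR)).SepSet
        {a : ↥(L ∪ S ∪ UR) | (a : V) ∈ F} {a : ↥(L ∪ S ∪ UR) | (a : V) ∈ T} ∨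
      (leftGraph G S UL (R ∪ S ∪ UL)).SepSet
        {a : ↥(R ∪ S ∪ UL) | (a : V) ∈ F} {a : ↥(R ∪ S ∪ UL) | (a : V) ∈ T} := by
  obtain ⟨t1, t2, ht1T, ht2T, hnr12⟩ := hsepT
  have hS : ∀ s s' : ↥Fᶜ, (s : V) ∈ S → (s' : V) ∈ S → (G.induce Fᶜ).Reachable s s' := by
    intro s s' hs hs'
    by_contra h
    exact hnsepS ⟨s, s', hs, hs', h⟩
  have hnb : (∀ s : ↥Fᶜ, (s : V) ∈ S → ¬ (G.induce Fᶜ).Reachable t1 s) ∨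
      (∀ s : ↥Fᶜ, (s : V) ∈ S → ¬ (G.induce Fᶜ).Reachable t2 s) := by
    by_contra h
    push_neg at h
    obtain ⟨⟨s1, hs1, hr1⟩, ⟨s2, hs2, hr2⟩⟩ := h
    exact hnr12 (hr1.trans ((hS s1 s2 hs1 hs2).trans hr2.symm))
  obtain ⟨a, b, haT, hbT, hnr, hnotouch⟩ :
      ∃ a b : ↥Fᶜ, (a : V) ∈ T ∧ (b : V) ∈ T ∧ ¬ (G.induce Fᶜ).Reachable a b ∧
        ∀ s : ↥Fᶜ, (s : V) ∈ S → ¬ (G.induce Fᶜ).Reachable a s := by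
    rcases hnb with h | h
    · exact ⟨t1, t2, ht1T, ht2T, hnr12, h⟩
    · exact ⟨t2, t1, ht2T, ht1T, fun hr => hnr12 hr.symm, h⟩
  have hamem : (a : V) ∈ L ∪ S ∪ R := by rw [hUnion]; trivial
  have haNS : (a : V) ∉ S := fun hs => hnotouch a hs (Reachable.refl a)
  rcases hamem with (haL | haS) | haR
  · exact Or.inl (onesided G f T L S R UR F hUnion hLR hLS hURsub hURcard hURfirst
      hnoedge hFcard a b haT hbT hnr hnotouch haL)
  · exact absurd haS haNS
  · refine Or.inr (onesided G f T R S L UL F ?_ hLR.symm hSR.symm hULsub hULcard hULfirst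
      ?_ hFcard a b haT hbT hnr hnotouch haR)
    · rw [← hUnion]; ext x; simp only [Set.mem_union]; tauto
    · exact fun x hx y hy h => hnoedge y hy x hx h.symm
end

section
/- Let G be an f-vertex-connected undirected graph with terminal set T and a vertex T-cut (L,S,R), with f-left and f-right graphs G_L and G_R. Let F ⊆ V with |F| = f. If F separates T in G but does not separate S in G, then either F ⊆ L ∪ S and F separates T ∩ V(G_L) in G_L, or F ⊆ R ∪ S and F separates T ∩ V(G_R) in G_R. -/
open SimpleGraph Relation

def ARel {α : Type*} (G : SimpleGraph α) (F : Set α) : α → α → Prop :=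
  fun u v => G.Adj u v ∧ u ∉ F ∧ v ∉ F

lemma arel_symm {α : Type*} (G : SimpleGraph α) (F : Set α) : Symmetric (ARel G F) :=
  fun _ _ ⟨h, h1, h2⟩ => ⟨h.symm, h2, h1⟩

lemma reach_iff {α : Type*} (G : SimpleGraph α) (F : Set α) {x y : α}
    (hx : x ∈ Fᶜ) (hy : y ∈ Fᶜ) :
    (G.induce Fᶜ).Reachable ⟨x, hx⟩ ⟨y, hy⟩ ↔ ReflTransGen (ARel G F) x y := by
  constructor
  · intro h
    rw [SimpleGraph.reachable_iff_reflTransGen] at h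
    exact h.lift (fun a : ↥Fᶜ => (a : α))
      (fun {a b} hab => ⟨by simpa using hab, a.2, b.2⟩)
  · intro h
    induction h with
    | refl => exact Reachable.refl _
    | @tail b c hab hbc ih =>
        exact (ih hbc.2.1).trans (SimpleGraph.Adj.reachable (by simpa using hbc.1))

lemma key_s5 {V : Type*} [Fintype V] (G : SimpleGraph V) (f : ℕ)
    (hfconn : ∀ C : Set V, G.IsVertexCut C → f ≤ C.ncard)
    (T L S R : Set V)
    (hUnion : ∀ v, v ∈ L ∨ v ∈ S ∨ v ∈ R)
    (hLS : Disjoint L S) (hLR : Disjoint L R) (hSR : Disjoint S R)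
    (hnoedge : ∀ a ∈ L, ∀ b ∈ R, ¬ G.Adj a b)
    (UR : Set V) (hURsub : UR ⊆ R) (hURne : UR.Nonempty)
    (hURfirst : T ∩ R ⊆ UR ∨ UR ⊆ T)
    (F : Set V) (hFcard : F.ncard = f)
    (t t' : V) (htT : t ∈ T) (htF : t ∉ F) (ht'T : t' ∈ T) (ht'F : t' ∉ F)
    (hsep : ¬ ReflTransGen (ARel G F) t t')
    (htL : t ∈ L)
    (hS : ∀ s ∈ S, ¬ ReflTransGen (ARel G F) t s) :
    F ⊆ L ∪ S ∧ (leftGraph G S UR (L ∪ S ∪ UR)).SepSet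
        {a : ↥(L ∪ S ∪ UR) | (a : V) ∈ F} {a : ↥(L ∪ S ∪ UR) | (a : V) ∈ T} := by
  classical
  set C : Set V := {v | ReflTransGen (ARel G F) t v} with hC
  have hCF : C ⊆ Fᶜ := by
    intro v hv
    rcases (ReflTransGen.cases_tail hv) with h | ⟨b, _, hbc⟩
    · subst h; exact htF
    · exact hbc.2.2
  have hCL : C ⊆ L := by
    intro v hv
    induction hv with
    | refl => exact htL
    | @tail b c hb hbc ih =>
        have hbL : b ∈ L := ih
        rcases hUnion c with h | h | h
        · exact h
        · exact absurd (hb.tail hbc) (hS c h)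
        · exact absurd hbc.1 (hnoedge b hbL c h)
  -- the neighborhood of C
  set N : Set V := {x | x ∈ F ∧ ∃ u ∈ C, G.Adj u x} with hN
  have hNF : N ⊆ F := fun x hx => hx.1
  have hNLS : N ⊆ F ∩ (L ∪ S) := by
    rintro x ⟨hxF, u, huC, hadj⟩
    refine ⟨hxF, ?_⟩
    rcases hUnion x with h | h | h
    · exact Or.inl h
    · exact Or.inr h
    · exact absurd hadj (hnoedge u (hCL huC) x h)
  -- reachable set from t in G - N is contained in C
  have hreachN : ∀ v, ReflTransGen (ARel G N) t v → v ∈ C := by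
    intro v hv
    induction hv with
    | refl => exact ReflTransGen.refl
    | @tail b c hb hbc ih =>
        have hbC : b ∈ C := ih
        have hcF : c ∉ F := by
          intro hcF
          exact hbc.2.2 ⟨hcF, b, hbC, hbc.1⟩
        exact hbC.tail ⟨hbc.1, hCF hbC, hcF⟩
  have ht'C : t' ∉ C := hsep
  have htN : t ∉ N := fun h => htF (hNF h)
  have ht'N : t' ∉ N := fun h => ht'F (hNF h)
  have hcut : G.IsVertexCut N := by
    refine ⟨⟨t, htN⟩, ⟨t', ht'N⟩, fun h => ?_⟩
    exact ht'C (hreachN t' ((reach_iff G N htN ht'N).mp h))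
  -- cardinality argument
  have hFLS : F ⊆ L ∪ S := by
    have h1 : f ≤ N.ncard := hfconn N hcut
    have h2 : N.ncard ≤ (F ∩ (L ∪ S)).ncard := Set.ncard_le_ncard hNLS (Set.toFinite _)
    have h3 : (F ∩ (L ∪ S)).ncard ≤ F.ncard :=
      Set.ncard_le_ncard Set.inter_subset_left (Set.toFinite _)
    have heq : F ∩ (L ∪ S) = F := by
      apply Set.eq_of_subset_of_ncard_le Set.inter_subset_left
      omega
    rw [← heq]; exact Set.inter_subset_right
  refine ⟨hFLS, ?_⟩
  -- choose the second terminal y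
  have hte : ∀ y : V, y ∈ T → y ∉ F → y ∉ C → y ∈ (L ∪ S ∪ UR) →
      (leftGraph G S UR (L ∪ S ∪ UR)).SepSet
        {a : ↥(L ∪ S ∪ UR) | (a : V) ∈ F} {a : ↥(L ∪ S ∪ UR) | (a : V) ∈ T} := by
    intro y hyT hyF hyC hyW
    set W : Set V := L ∪ S ∪ UR with hW
    set F' : Set ↥W := {a : ↥W | (a : V) ∈ F} with hF'
    have htW : t ∈ W := Or.inl (Or.inl htL)
    have htF' : (⟨t, htW⟩ : ↥W) ∈ F'ᶜ := htF
    have hyF' : (⟨y, hyW⟩ : ↥W) ∈ F'ᶜ := hyF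
    refine ⟨⟨⟨t, htW⟩, htF'⟩, ⟨⟨y, hyW⟩, hyF'⟩, htT, hyT, fun h => ?_⟩
    have h2 := (reach_iff (leftGraph G S UR W) F' htF' hyF').mp h
    -- reachable set from t in leftGraph - F is contained in C
    have main : ∀ b : ↥W, ReflTransGen (ARel (leftGraph G S UR W) F') ⟨t, htW⟩ b →
        (b : V) ∈ C := by
      intro b hb
      induction hb with
      | refl => exact ReflTransGen.refl
      | @tail b c hb hbc ih =>
          have hbC : (b : V) ∈ C := ih
          have hbL : (b : V) ∈ L := hCL hbC
          have hcF : (c : V) ∉ F := hbc.2.2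
          rcases hbc.1.2 with hadj | ⟨h1, _⟩ | ⟨h1, _⟩ | ⟨h1, _⟩
          · exact hbC.tail ⟨hadj, hCF hbC, hcF⟩
          · exact absurd h1 (fun hh => Set.disjoint_left.mp hLR hbL (hURsub hh))
          · exact absurd h1 (fun hh => Set.disjoint_left.mp hLR hbL (hURsub hh))
          · exact absurd h1 (Set.disjoint_left.mp hLS hbL)
    exact hyC (main _ h2)
  -- case analysis on where t' lives
  rcases hUnion t' with h | h | h
  · exact hte t' ht'T ht'F ht'C (Or.inl (Or.inl h))
  · exact hte t' ht'T ht'F ht'C (Or.inl (Or.inr h))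
  · rcases hURfirst with hfirst | hfirst
    · exact hte t' ht'T ht'F ht'C (Or.inr (hfirst ⟨ht'T, h⟩))
    · obtain ⟨u, hu⟩ := hURne
      have huR : u ∈ R := hURsub hu
      have huF : u ∉ F := by
        intro huF
        rcases hFLS huF with h' | h'
        · exact Set.disjoint_left.mp hLR h' huR
        · exact Set.disjoint_left.mp hSR h' huR
      have huC : u ∉ C := fun hc => Set.disjoint_left.mp hLR (hCL hc) huR
      exact hte u (hfirst hu) huF huC (Or.inr hu)

/-- In an `f`-connected graph (every vertex cut has size `≥ f`), if `F` of size exactly `f`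
separates `T` but not `S`, then either `F ⊆ L ∪ S` and `F` separates `T ∩ V(G_L)` in `G_L`,
or `F ⊆ R ∪ S` and `F` separates `T ∩ V(G_R)` in `G_R`. -/
theorem stmt5 {V : Type*} [Fintype V] (G : SimpleGraph V) (f : ℕ) (hf : 1 ≤ f)
    (hfconn : ∀ C : Set V, G.IsVertexCut C → f ≤ C.ncard)
    (T L S R : Set V) (hLne : L.Nonempty) (hRne : R.Nonempty)
    (hUnion : L ∪ S ∪ R = Set.univ) (hLS : Disjoint L S) (hLR : Disjoint L R)
    (hSR : Disjoint S R)
    (hnoedge : ∀ a ∈ L, ∀ b ∈ R, ¬ G.Adj a b)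
    (hTL : (T ∩ L).Nonempty) (hTR : (T ∩ R).Nonempty)
    (UL : Set V) (hULsub : UL ⊆ L) (hULcard : UL.ncard = min (f + 1) L.ncard)
    (hULfirst : T ∩ L ⊆ UL ∨ UL ⊆ T)
    (UR : Set V) (hURsub : UR ⊆ R) (hURcard : UR.ncard = min (f + 1) R.ncard)
    (hURfirst : T ∩ R ⊆ UR ∨ UR ⊆ T)
    (F : Set V) (hFcard : F.ncard = f)
    (hsepT : G.SepSet F T) (hnsepS : ¬ G.SepSet F S) :
    (F ⊆ L ∪ S ∧ (leftGraph G S UR (L ∪ S ∪ UR)).SepSet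
        {a : ↥(L ∪ S ∪ UR) | (a : V) ∈ F} {a : ↥(L ∪ S ∪ UR) | (a : V) ∈ T}) ∨
      (F ⊆ R ∪ S ∧ (leftGraph G S UL (R ∪ S ∪ UL)).SepSet
        {a : ↥(R ∪ S ∪ UL) | (a : V) ∈ F} {a : ↥(R ∪ S ∪ UL) | (a : V) ∈ T}) := by
  classical
  have hUnion' : ∀ v, v ∈ L ∨ v ∈ S ∨ v ∈ R := by
    intro v
    have : v ∈ L ∪ S ∪ R := hUnion ▸ Set.mem_univ v
    rcases this with (h | h) | h
    · exact Or.inl h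
    · exact Or.inr (Or.inl h)
    · exact Or.inr (Or.inr h)
  have hUnion'' : ∀ v, v ∈ R ∨ v ∈ S ∨ v ∈ L := by
    intro v
    rcases hUnion' v with h | h | h
    · exact Or.inr (Or.inr h)
    · exact Or.inr (Or.inl h)
    · exact Or.inl h
  have hnoedge' : ∀ a ∈ R, ∀ b ∈ L, ¬ G.Adj a b :=
    fun a ha b hb hadj => hnoedge b hb a ha hadj.symm
  have hURne : UR.Nonempty := by
    rw [← Set.ncard_pos (Set.toFinite UR)]
    have hR : 1 ≤ R.ncard := (Set.ncard_pos (Set.toFinite R)).mpr hRne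
    omega
  have hULne : UL.Nonempty := by
    rw [← Set.ncard_pos (Set.toFinite UL)]
    have hL : 1 ≤ L.ncard := (Set.ncard_pos (Set.toFinite L)).mpr hLne
    omega
  obtain ⟨s, t, hsT, htT, hnr⟩ := hsepT
  have hnr' : ¬ ReflTransGen (ARel G F) ↑s ↑t :=
    fun h => hnr ((reach_iff G F s.2 t.2).mpr h)
  have hSreach : ∀ a b : V, a ∈ S → a ∉ F → b ∈ S → b ∉ F →
      ReflTransGen (ARel G F) a b := by
    intro a b haS haF hbS hbF
    by_contra hcon
    exact hnsepS ⟨⟨a, haF⟩, ⟨b, hbF⟩, haS, hbS,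
      fun hr => hcon ((reach_iff G F haF hbF).mp hr)⟩
  have hnotF : ∀ x y : V, x ∉ F → ReflTransGen (ARel G F) x y → y ∉ F := by
    intro x y hx h
    rcases h.cases_tail with h' | ⟨b, _, hbc⟩
    · subst h'; exact hx
    · exact hbc.2.2
  have hsymm : Symmetric (ReflTransGen (ARel G F)) :=
    by
      haveI : Std.Symm (ARel G F) := ⟨arel_symm G F⟩
      exact fun a b h => (Relation.ReflTransGen.symmetric : Std.Symm (ReflTransGen (ARel G F))).symm a b h
  have main : ∀ a b : V, a ∈ T → a ∉ F → b ∈ T → b ∉ F →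
      ¬ ReflTransGen (ARel G F) a b → (∀ z ∈ S, ¬ ReflTransGen (ARel G F) a z) →
      (F ⊆ L ∪ S ∧ (leftGraph G S UR (L ∪ S ∪ UR)).SepSet
        {a : ↥(L ∪ S ∪ UR) | (a : V) ∈ F} {a : ↥(L ∪ S ∪ UR) | (a : V) ∈ T}) ∨
      (F ⊆ R ∪ S ∧ (leftGraph G S UL (R ∪ S ∪ UL)).SepSet
        {a : ↥(R ∪ S ∪ UL) | (a : V) ∈ F} {a : ↥(R ∪ S ∪ UL) | (a : V) ∈ T}) := by
    intro a b haT haF hbT hbF hsep hSa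
    rcases hUnion' a with h | h | h
    · exact Or.inl (key_s5 G f hfconn T L S R hUnion' hLS hLR hSR hnoedge
        UR hURsub hURne hURfirst F hFcard a b haT haF hbT hbF hsep h hSa)
    · exact absurd ReflTransGen.refl (hSa a h)
    · exact Or.inr (key_s5 G f hfconn T R S L hUnion'' hSR.symm hLR.symm hLS.symm hnoedge'
        UL hULsub hULne hULfirst F hFcard a b haT haF hbT hbF hsep h hSa)
  by_cases hc1 : ∃ z ∈ S, ReflTransGen (ARel G F) ↑s z
  · by_cases hc2 : ∃ z ∈ S, ReflTransGen (ARel G F) ↑t z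
    · obtain ⟨z1, hz1S, hz1⟩ := hc1
      obtain ⟨z2, hz2S, hz2⟩ := hc2
      have hz1F : z1 ∉ F := hnotF _ _ s.2 hz1
      have hz2F : z2 ∉ F := hnotF _ _ t.2 hz2
      exact absurd (hz1.trans ((hSreach z1 z2 hz1S hz1F hz2S hz2F).trans (hsymm hz2)))
        hnr'
    · exact main ↑t ↑s htT t.2 hsT s.2 (fun h => hnr' (hsymm h))
        (fun z hz hr => hc2 ⟨z, hz, hr⟩)
  · exact main ↑s ↑t hsT s.2 htT t.2 hnr' (fun z hz hr => hc1 ⟨z, hz, hr⟩)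
end

section
/- If G has arboricity α, then the f-left graph G_L (and symmetrically G_R) has arboricity at most α + f + 1. -/
open SimpleGraph

/-- `G` has arboricity at most `k`: the edges of `G` are covered by `k` forests. -/
def ArboricityLE {α : Type*} (G : SimpleGraph α) (k : ℕ) : Prop :=
  ∃ H : Fin k → SimpleGraph α, (∀ i, (H i).IsAcyclic) ∧
    ∀ a b, G.Adj a b → ∃ i, (H i).Adj a b

lemma comap_acyclic' {α β : Type*} {G : SimpleGraph β} (hG : G.IsAcyclic)
    (f : α ↪ β) : (G.comap f).IsAcyclic := by
  intro v p hp
  exact hG ((p.map (SimpleGraph.Embedding.comap f G).toHom)) (hp.map f.injective)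

lemma star_acyclic' {α : Type*} {H : SimpleGraph α} (P : α → Prop)
    (huniq : ∀ x y, P x → P y → x = y)
    (hinc : ∀ x y, H.Adj x y → P x ∨ P y) : H.IsAcyclic := by
  intro v p hp
  have h3 := hp.three_le_length
  cases p with
  | nil => simp at h3
  | @cons _ w _ h q =>
    have hq : q.IsPath := ((Walk.cons_isCycle_iff q h).mp hp).1
    cases q with
    | nil => simp at h3
    | @cons _ w' _ h' q' =>
      cases q' with
      | nil => simp [Walk.length_cons] at h3
      | @cons _ w'' _ h'' q'' =>
        have hnd := hq.support_nodup
        simp only [Walk.support_cons, List.nodup_cons] at hnd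
        have hwv : v ∈ q''.support := Walk.end_mem_support q''
        rcases hinc _ _ h with hPv | hPw
        · rcases hinc _ _ h' with hPw | hPw'
          · exact h.ne (huniq _ _ hPv hPw)
          · have : v = w' := huniq _ _ hPv hPw'
            exact hnd.2.1 (this ▸ (by simp [hwv]))
        · rcases hinc _ _ h'' with hPw' | hPw''
          · exact h'.ne (huniq _ _ hPw hPw')
          · have : w = w'' := huniq _ _ hPw hPw''
            exact hnd.1 (by simp [this, Walk.start_mem_support])

/-- If `G` has arboricity at most `α`, then the `f`-left graph `G_L` has arboricity
at most `α + f + 1`. -/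
theorem stmt6 {V : Type*} [Fintype V] (G : SimpleGraph V) (a f : ℕ)
    (L S R : Set V) (hLne : L.Nonempty) (hRne : R.Nonempty)
    (hUnion : L ∪ S ∪ R = Set.univ) (hLS : Disjoint L S) (hLR : Disjoint L R)
    (hSR : Disjoint S R)
    (hnoedge : ∀ x ∈ L, ∀ y ∈ R, ¬ G.Adj x y)
    (UR : Set V) (hURsub : UR ⊆ R) (hURcard : UR.ncard ≤ f + 1)
    (hG : ArboricityLE G a) :
    ArboricityLE (leftGraph G S UR (L ∪ S ∪ UR)) (a + f + 1) := by
  classical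
  obtain ⟨H, hHac, hHcov⟩ := hG
  haveI : Fintype ↥UR := Fintype.ofFinite _
  have hcard : Fintype.card ↥UR ≤ Fintype.card (Fin (f + 1)) := by
    rw [Fintype.card_fin, ← Nat.card_eq_fintype_card, Nat.card_coe_set_eq]
    exact hURcard
  obtain ⟨g⟩ := Function.Embedding.nonempty_of_card_le hcard
  set W : Set V := L ∪ S ∪ UR with hW
  let P : Fin (f + 1) → ↥W → Prop := fun i x => ∃ hx : (x : V) ∈ UR, g ⟨x, hx⟩ = i
  let St : Fin (f + 1) → SimpleGraph ↥W := fun i =>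
    { Adj := fun x y => x ≠ y ∧ (P i x ∨ P i y) ∧
        ((x : V) ∈ UR ∨ (x : V) ∈ S) ∧ ((y : V) ∈ UR ∨ (y : V) ∈ S)
      symm := by constructor; rintro x y ⟨hne, h1, h2, h3⟩; exact ⟨hne.symm, h1.symm, h3, h2⟩
      loopless := by constructor; rintro x ⟨hne, -⟩; exact hne rfl }
  have huniq : ∀ (i : Fin (f + 1)) (x y : ↥W), P i x → P i y → x = y := by
    rintro i x y ⟨hx, hgx⟩ ⟨hy, hgy⟩
    have := g.injective (hgx.trans hgy.symm)
    have h2 : (x : V) = (y : V) := congrArg (Subtype.val : ↥UR → V) this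
    exact Subtype.ext h2
  refine ⟨fun i => if h : (i : ℕ) < a then (H ⟨i, h⟩).comap (Function.Embedding.subtype _)
      else St ⟨(i : ℕ) - a, by omega⟩, ?_, ?_⟩
  · intro i
    dsimp only
    split_ifs with h
    · exact comap_acyclic' (hHac _) _
    · exact star_acyclic' (P ⟨(i : ℕ) - a, by omega⟩) (huniq _)
        (by rintro x y ⟨-, h1, -⟩; exact h1)
  · rintro x y ⟨hne, hadj⟩
    rcases hadj with hxy | ⟨hx, hy⟩ | ⟨hx, hy⟩ | ⟨hx, hy⟩
    · obtain ⟨i, hi⟩ := hHcov _ _ hxy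
      refine ⟨⟨(i : ℕ), by omega⟩, ?_⟩
      dsimp only
      rw [dif_pos (show ((i : ℕ) : ℕ) < a from i.isLt)]
      simpa using hi
    · refine ⟨⟨a + (g ⟨x, hx⟩ : ℕ), by omega⟩, ?_⟩
      dsimp only
      rw [dif_neg (by simp)]
      exact ⟨hne, Or.inl ⟨hx, Fin.ext (by simp)⟩, Or.inl hx, Or.inl hy⟩
    · refine ⟨⟨a + (g ⟨x, hx⟩ : ℕ), by omega⟩, ?_⟩
      dsimp only
      rw [dif_neg (by simp)]
      exact ⟨hne, Or.inl ⟨hx, Fin.ext (by simp)⟩, Or.inl hx, Or.inr hy⟩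
    · refine ⟨⟨a + (g ⟨y, hy⟩ : ℕ), by omega⟩, ?_⟩
      dsimp only
      rw [dif_neg (by simp)]
      exact ⟨hne, Or.inr ⟨hy, Fin.ext (by simp)⟩, Or.inr hx, Or.inl hy⟩
end

section
/- Let G be a graph consisting of vertices {x_a : a ∈ A} ∪ {y₁,…,y_f} ∪ {z}, with edges (x_a, y_i) whenever a_i = 1 and edges (y_i, z) for all i, where A ⊆ {0,1}^f. For b ∈ {0,1}^f, let F_b = {y_i : b_i = 0}. Then there exists a ∈ A orthogonal to b (i.e., ∑_i a_i b_i = 0) if and only if G − F_b is disconnected. (Assume A nonempty and not every coordinate of b is 0, i.e., F_b ≠ {y₁,…,y_f}, or more simply assume some y_i survives.) -/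
open SimpleGraph

/-- The OV graph: vertices `{x_a : a ∈ A} ∪ {y_1,…,y_f} ∪ {z}`; `x_a ~ y_i` iff `a i = 1`,
and `y_i ~ z` for all `i`. -/
def ovGraph (f : ℕ) (A : Set (Fin f → Bool)) : SimpleGraph (↥A ⊕ (Fin f ⊕ Unit)) where
  Adj p q :=
    match p, q with
    | Sum.inl _, Sum.inl _ => False
    | Sum.inl a, Sum.inr (Sum.inl i) => (a : Fin f → Bool) i = true
    | Sum.inl _, Sum.inr (Sum.inr _) => False
    | Sum.inr (Sum.inl i), Sum.inl a => (a : Fin f → Bool) i = true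
    | Sum.inr (Sum.inl _), Sum.inr (Sum.inl _) => False
    | Sum.inr (Sum.inl _), Sum.inr (Sum.inr _) => True
    | Sum.inr (Sum.inr _), Sum.inl _ => False
    | Sum.inr (Sum.inr _), Sum.inr (Sum.inl _) => True
    | Sum.inr (Sum.inr _), Sum.inr (Sum.inr _) => False
  symm := ⟨by
    rintro (a | i | u) (b | j | w) h <;> exact h⟩
  loopless := ⟨by
    rintro (a | i | u) h <;> exact h⟩

/-- There is `a ∈ A` orthogonal to `b` iff deleting `F_b = {y_i : b i = 0}` disconnects
the OV graph. -/
theorem stmt12 (f : ℕ) (hf : 1 ≤ f) (A : Set (Fin f → Bool)) (hA : A.Nonempty)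
    (b : Fin f → Bool) (hb : ∃ i, b i = true) :
    (∃ a ∈ A, ∀ i, a i = true → b i = false) ↔
      ¬ ((ovGraph f A).induce
          {p : ↥A ⊕ (Fin f ⊕ Unit) | ∃ i, b i = false ∧ p = Sum.inr (Sum.inl i)}ᶜ).Connected := by
  set S : Set (↥A ⊕ (Fin f ⊕ Unit)) :=
    {p : ↥A ⊕ (Fin f ⊕ Unit) | ∃ i, b i = false ∧ p = Sum.inr (Sum.inl i)}ᶜ with hS
  have hmemx : ∀ a : ↥A, (Sum.inl a : ↥A ⊕ (Fin f ⊕ Unit)) ∈ S := by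
    intro a; simp [hS]
  have hmemz : (Sum.inr (Sum.inr ()) : ↥A ⊕ (Fin f ⊕ Unit)) ∈ S := by
    simp [hS]
  have hmemy : ∀ i : Fin f, (Sum.inr (Sum.inl i) : ↥A ⊕ (Fin f ⊕ Unit)) ∈ S ↔ b i = true := by
    intro i
    simp only [hS, Set.mem_compl_iff, Set.mem_setOf_eq, not_exists]
    constructor
    · intro h
      by_contra hbi
      exact h i ⟨by simpa using hbi, rfl⟩
    · rintro h j ⟨hbj, hj⟩
      obtain rfl : i = j := by simpa using hj
      simp [h] at hbj
  constructor
  · rintro ⟨a, haA, horth⟩ hconn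
    have hr := hconn.preconnected ⟨Sum.inl ⟨a, haA⟩, hmemx _⟩ ⟨Sum.inr (Sum.inr ()), hmemz⟩
    obtain ⟨w⟩ := hr
    cases w with
    | cons h p =>
      rename_i v
      obtain ⟨(a' | i | u), hv⟩ := v
      · exact h
      · have hai : (a : Fin f → Bool) i = true := h
        have := (hmemy i).mp hv
        rw [horth i hai] at this
        exact Bool.false_ne_true this
      · exact h
  · intro h
    by_contra hno
    push_neg at hno
    apply h
    haveI : Nonempty ↥S := ⟨⟨Sum.inr (Sum.inr ()), hmemz⟩⟩
    have key : ∀ u : ↥S,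
        ((ovGraph f A).induce S).Reachable u ⟨Sum.inr (Sum.inr ()), hmemz⟩ := by
      rintro ⟨(a | i | u), hu⟩
      · obtain ⟨i, hai, hbi⟩ := hno a.1 a.2
        have hbi' : b i = true := by simpa using hbi
        have h1 : ((ovGraph f A).induce S).Adj ⟨Sum.inl a, hu⟩
            ⟨Sum.inr (Sum.inl i), (hmemy i).mpr hbi'⟩ := hai
        have h2 : ((ovGraph f A).induce S).Adj ⟨Sum.inr (Sum.inl i), (hmemy i).mpr hbi'⟩
            ⟨Sum.inr (Sum.inr ()), hmemz⟩ := trivial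
        exact h1.reachable.trans h2.reachable
      · exact (show ((ovGraph f A).induce S).Adj ⟨Sum.inr (Sum.inl i), hu⟩
          ⟨Sum.inr (Sum.inr ()), hmemz⟩ from trivial).reachable
      · exact Reachable.refl _
    exact ⟨fun u v => (key u).trans (key v).symm⟩
end

section
/- Let G be a graph with terminal set T, vertex T-cut (L,S,R), and f-right graph G_R with representative sets U_L ⊆ L ∩ (T first), U_R ⊆ R. Let U_S be a set of min(f+1, |T ∩ S|) terminals in T ∩ S. Let F ⊆ V(G_R) with |F| ≤ f. If in G_R, F separates T ∩ V(G_R) but separates neither S nor T ∩ R, then F separates U_L ∪ U_R ∪ U_S in G_R. -/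
open SimpleGraph

/-- Stepchild lemma: if `F ⊆ V(G_R)` with `|F| ≤ f` separates `T ∩ V(G_R)` in the
`f`-right graph `G_R`, but separates neither `S` nor `T ∩ R` there, then `F` separates
`U_L ∪ U_R ∪ U_S` in `G_R`. -/
theorem stmt14 {V : Type*} [Fintype V] (G : SimpleGraph V) (f : ℕ) (hf : 1 ≤ f)
    (T L S R : Set V) (hLne : L.Nonempty) (hRne : R.Nonempty)
    (hUnion : L ∪ S ∪ R = Set.univ) (hLS : Disjoint L S) (hLR : Disjoint L R)
    (hSR : Disjoint S R)
    (hnoedge : ∀ a ∈ L, ∀ b ∈ R, ¬ G.Adj a b)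
    (UL : Set V) (hULsub : UL ⊆ L) (hULcard : UL.ncard = min (f + 1) L.ncard)
    (hULfirst : T ∩ L ⊆ UL ∨ UL ⊆ T)
    (UR : Set V) (hURsub : UR ⊆ R) (hURcard : UR.ncard = min (f + 1) R.ncard)
    (hURfirst : T ∩ R ⊆ UR ∨ UR ⊆ T)
    (US : Set V) (hUSsub : US ⊆ T ∩ S) (hUScard : US.ncard = min (f + 1) (T ∩ S).ncard)
    (F : Set V) (hFsub : F ⊆ R ∪ S ∪ UL) (hFcard : F.ncard ≤ f)
    (hsepT : (leftGraph G S UL (R ∪ S ∪ UL)).SepSet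
        {a : ↥(R ∪ S ∪ UL) | (a : V) ∈ F} {a : ↥(R ∪ S ∪ UL) | (a : V) ∈ T})
    (hnsepS : ¬ (leftGraph G S UL (R ∪ S ∪ UL)).SepSet
        {a : ↥(R ∪ S ∪ UL) | (a : V) ∈ F} {a : ↥(R ∪ S ∪ UL) | (a : V) ∈ S})
    (hnsepTR : ¬ (leftGraph G S UL (R ∪ S ∪ UL)).SepSet
        {a : ↥(R ∪ S ∪ UL) | (a : V) ∈ F} {a : ↥(R ∪ S ∪ UL) | (a : V) ∈ T ∩ R}) :
    (leftGraph G S UL (R ∪ S ∪ UL)).SepSet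
        {a : ↥(R ∪ S ∪ UL) | (a : V) ∈ F} {a : ↥(R ∪ S ∪ UL) | (a : V) ∈ UL ∪ UR ∪ US} := by
  classical
  set W : Set V := R ∪ S ∪ UL with hW
  set H := leftGraph G S UL W with hH
  set F' : Set ↥W := {a : ↥W | (a : V) ∈ F} with hF'
  -- unseparated sets give reachability facts
  simp only [SimpleGraph.SepSet, Set.mem_setOf_eq] at hsepT hnsepS hnsepTR
  push_neg at hnsepS hnsepTR
  obtain ⟨s, t, hsT, htT, hst⟩ := hsepT
  -- helper: replace any terminal of W by a vertex of UL ∪ UR ∪ US in the same component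
  have key : ∀ x : ↥F'ᶜ, ((x : ↥W) : V) ∈ T →
      ∃ y : ↥F'ᶜ, ((y : ↥W) : V) ∈ UL ∪ UR ∪ US ∧ (H.induce F'ᶜ).Reachable x y := by
    intro x hxT
    have hxW : ((x : ↥W) : V) ∈ W := (x : ↥W).2
    have hxF : ((x : ↥W) : V) ∉ F := x.2
    rcases hxW with (hxR | hxS) | hxUL
    · -- x ∈ R, so x ∈ T ∩ R
      rcases hURfirst with hTR | hURT
      · exact ⟨x, Or.inl (Or.inr (hTR ⟨hxT, hxR⟩)), Reachable.refl x⟩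
      · -- UR ⊆ T, hence UR ⊆ T ∩ R; find u ∈ UR \ F
        have hnot : ¬ UR ⊆ F := by
          intro hsubF
          have h1 : UR.ncard ≤ f :=
            le_trans (Set.ncard_le_ncard hsubF (Set.toFinite F)) hFcard
          have h2 : R.ncard ≤ f := by omega
          have h3 : UR = R := by
            apply Set.eq_of_subset_of_ncard_le hURsub _ (Set.toFinite R)
            omega
          exact hxF (hsubF (h3 ▸ hxR))
        obtain ⟨u, huUR, huF⟩ := Set.not_subset.mp hnot
        have huR : u ∈ R := hURsub huUR
        have huW : u ∈ W := Or.inl (Or.inl huR)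
        refine ⟨⟨⟨u, huW⟩, huF⟩, Or.inl (Or.inr huUR), ?_⟩
        exact hnsepTR x ⟨⟨u, huW⟩, huF⟩ ⟨hxT, hxR⟩ ⟨hURT huUR, huR⟩
    · -- x ∈ S, so x ∈ T ∩ S
      have hnot : ¬ US ⊆ F := by
        intro hsubF
        have h1 : US.ncard ≤ f :=
          le_trans (Set.ncard_le_ncard hsubF (Set.toFinite F)) hFcard
        have h3 : US = T ∩ S := by
          apply Set.eq_of_subset_of_ncard_le hUSsub _ (Set.toFinite _)
          omega
        exact hxF (hsubF (h3 ▸ ⟨hxT, hxS⟩))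
      obtain ⟨u, huUS, huF⟩ := Set.not_subset.mp hnot
      have huS : u ∈ S := (hUSsub huUS).2
      have huW : u ∈ W := Or.inl (Or.inr huS)
      refine ⟨⟨⟨u, huW⟩, huF⟩, Or.inr huUS, ?_⟩
      exact hnsepS x ⟨⟨u, huW⟩, huF⟩ hxS huS
    · exact ⟨x, Or.inl (Or.inl hxUL), Reachable.refl x⟩
  obtain ⟨s', hs', hss'⟩ := key s hsT
  obtain ⟨t', ht', htt'⟩ := key t htT
  refine ⟨s', t', hs', ht', fun hr => hst ?_⟩
  exact (hss'.trans hr).trans htt'.symm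
end

section
/- Let G be an undirected graph, T ⊆ V a terminal set, and let F ⊆ V separate T in G. Let τ be a Steiner tree for T in G (a subtree of G containing all terminals of T). Then there exist two distinct vertices u, u' ∉ F, both neighbors in τ of vertices of F, such that u and u' lie in different connected components of G − F. -/
open SimpleGraph

/-- If `τ` is a Steiner tree for `T` in `G` (an acyclic subgraph of `G`, with vertex set
`Vτ ⊇ T`, connected on `Vτ`) and `F` separates `T` in `G`, then there are two distinct
non-faulty `τ`-neighbors `u, u'` of `F` lying in distinct components of `G - F`. -/
theorem stmt16 {V : Type*} [Fintype V] (G τ : SimpleGraph V) (hτG : τ ≤ G)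
    (hacyc : τ.IsAcyclic)
    (Vτ : Set V) (hedges : ∀ a b, τ.Adj a b → a ∈ Vτ ∧ b ∈ Vτ)
    (hτconn : ∀ a ∈ Vτ, ∀ b ∈ Vτ, τ.Reachable a b)
    (T : Set V) (hT : T ⊆ Vτ)
    (F : Set V) (hsep : G.SepSet F T) :
    ∃ u u' : V, u ≠ u' ∧ (∃ x ∈ F, τ.Adj u x) ∧ (∃ x' ∈ F, τ.Adj u' x') ∧
      G.SepPair F u u' := by
  classical
  obtain ⟨s, t, hsT, htT, hst⟩ := hsep
  obtain ⟨p⟩ := hτconn s (hT hsT) t (hT htT)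
  set n := p.length with hn
  -- reachability predicate on indices
  set R : ℕ → Prop := fun k => ∃ h : p.getVert k ∈ Fᶜ,
      (G.induce Fᶜ).Reachable s ⟨p.getVert k, h⟩ with hR
  have hR0 : R 0 := by
    refine ⟨by simp [p.getVert_zero, s.2], ?_⟩
    have : (⟨p.getVert 0, by simp [p.getVert_zero, s.2]⟩ : ↥Fᶜ) = s := by
      ext; simp [p.getVert_zero]
    rw [this]
  have hRn : ¬ R n := by
    rintro ⟨h, hr⟩
    apply hst
    have : (⟨p.getVert n, h⟩ : ↥Fᶜ) = t := by
      ext; simp [hn, p.getVert_length]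
    rwa [this] at hr
  set i := Nat.findGreatest R n with hi
  have hRi : R i := Nat.findGreatest_spec (Nat.zero_le n) hR0
  have hin : i ≤ n := Nat.findGreatest_le n
  have hilt : i < n := lt_of_le_of_ne hin (fun h => hRn (h ▸ hRi))
  have hnotR : ∀ m, i < m → m ≤ n → ¬ R m := fun m h1 h2 =>
    Nat.findGreatest_is_greatest h1 h2
  -- next non-faulty index after i
  set Q : ℕ → Prop := fun m => i < m ∧ m ≤ n ∧ p.getVert m ∈ Fᶜ with hQ
  have hQex : ∃ m, Q m := ⟨n, hilt, le_refl n, by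
    simp only [hn, p.getVert_length]; exact t.2⟩
  set j := Nat.find hQex with hj
  obtain ⟨hij, hjn, hju'⟩ : Q j := Nat.find_spec hQex
  have hjmin : ∀ m, m < j → ¬ Q m := fun m hm => Nat.find_min hQex hm
  obtain ⟨hu, hru⟩ := hRi
  -- if j = i + 1 we'd contradict maximality of i
  have hj2 : i + 2 ≤ j := by
    by_contra h
    have hji1 : j = i + 1 := le_antisymm (by omega) hij
    apply hnotR j hij hjn
    refine ⟨hju', hru.trans (Adj.reachable ?_)⟩
    show G.Adj (p.getVert i) (p.getVert j)
    rw [hji1]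
    exact hτG (p.adj_getVert_succ hilt)
  -- the two faulty neighbors
  have hxi : p.getVert (i + 1) ∈ F := by
    by_contra hx
    exact hjmin (i + 1) (by omega) ⟨by omega, by omega, hx⟩
  have hxj : p.getVert (j - 1) ∈ F := by
    by_contra hx
    exact hjmin (j - 1) (by omega) ⟨by omega, by omega, hx⟩
  have hadj1 : τ.Adj (p.getVert i) (p.getVert (i + 1)) := p.adj_getVert_succ hilt
  have hadj2 : τ.Adj (p.getVert j) (p.getVert (j - 1)) := by
    have := p.adj_getVert_succ (i := j - 1) (by omega)
    have hsub : j - 1 + 1 = j := by omega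
    rw [hsub] at this
    exact this.symm
  have hnotru' : ¬ (G.induce Fᶜ).Reachable s ⟨p.getVert j, hju'⟩ := by
    intro hr
    exact hnotR j hij hjn ⟨hju', hr⟩
  refine ⟨p.getVert i, p.getVert j, ?_, ⟨_, hxi, hadj1⟩, ⟨_, hxj, hadj2⟩,
    hu, hju', fun hr => hnotru' (hru.trans hr)⟩
  intro he
  apply hnotru'
  have : (⟨p.getVert i, hu⟩ : ↥Fᶜ) = ⟨p.getVert j, hju'⟩ := by ext; exact he
  rwa [this] at hru
end
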